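/- If for each layer the linear interpreter satisfies the freezing condition A_k(x)x + c_k(x) = h_k(x) for every x, then the composed linear interpreter agrees with the network at the reference input: F(x_0)·x_0 + r(x_0) = f(x_0), where f = L_n ∘ h_{n-1} ∘ L_{n-1} ∘ ⋯ ∘ h_1 ∘ L_1 and F, r are as in the sequential-network theorem with A_k = A_k(intermediate activation), c_k = c_k(intermediate activation). -/

import Mathlib

open Matrix Finset

/-- `revProd What n j = Ŵ_n * ⋯ * Ŵ_{n-j+1}`. -/
def revProd {d : ℕ} (What : ℕ → Matrix (Fin d) (Fin d) ℝ) (n : ℕ) : ℕ → Matrix (Fin d) (Fin d) ℝ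
  | 0 => 1
  | j + 1 => revProd What n j * What (n - j)

/-- `Qmat What n i = Ŵ_n * ⋯ * Ŵ_{i+1}`, so `Qmat What n n = 1` and
`Qmat What n 0 = Ŵ_n ⋯ Ŵ_1 = F`. -/
def Qmat {d : ℕ} (What : ℕ → Matrix (Fin d) (Fin d) ℝ) (n i : ℕ) : Matrix (Fin d) (Fin d) ℝ :=
  revProd What n (n - i)


lemma revProd_succ {d : ℕ} (W : ℕ → Matrix (Fin d) (Fin d) ℝ) (n j : ℕ) :
    revProd W (n + 1) (j + 1) = W (n + 1) * revProd W n j := by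
  induction j with
  | zero => simp [revProd]
  | succ j ih =>
    show revProd W (n + 1) (j + 1) * W (n + 1 - (j + 1)) = _
    rw [ih, Nat.succ_sub_succ]
    show _ = W (n + 1) * (revProd W n j * W (n - j))
    rw [mul_assoc]

lemma mulVec_sum' {d : ℕ} (M : Matrix (Fin d) (Fin d) ℝ) (s : Finset ℕ)
    (f : ℕ → Fin d → ℝ) : M *ᵥ (∑ i ∈ s, f i) = ∑ i ∈ s, M *ᵥ f i := by
  exact map_sum (Matrix.mulVecLin M) f s

/-- If each layer's linear interpreter satisfies the freezing condition
`A_k(x) x + c_k(x) = h_k(x)` for every `x`, then the composed linear interpreter,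
with masks evaluated at the forward-pass intermediate activations of `x₀`, agrees with
the network at the reference input: `F(x₀) x₀ + r(x₀) = f(x₀)`. -/
theorem composed_interpreter_agrees (d n : ℕ)
    (W : ℕ → Matrix (Fin d) (Fin d) ℝ) (b : ℕ → Fin d → ℝ)
    (h : ℕ → (Fin d → ℝ) → (Fin d → ℝ))
    (A : ℕ → (Fin d → ℝ) → Matrix (Fin d) (Fin d) ℝ)
    (c : ℕ → (Fin d → ℝ) → (Fin d → ℝ))
    (hfreeze : ∀ k x, (A k x) *ᵥ x + c k x = h k x)
    (x₀ : Fin d → ℝ) (z : ℕ → Fin d → ℝ)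
    (hz0 : z 0 = x₀)
    (hz : ∀ k, 1 ≤ k → k ≤ n → z k = h k ((W k) *ᵥ z (k - 1) + b k)) :
    (Qmat (fun k => A k ((W k) *ᵥ z (k - 1) + b k) * W k) n 0) *ᵥ x₀ +
      ∑ i ∈ Finset.Icc 1 n,
        (Qmat (fun k => A k ((W k) *ᵥ z (k - 1) + b k) * W k) n i) *ᵥ
          ((A i ((W i) *ᵥ z (i - 1) + b i)) *ᵥ b i + c i ((W i) *ᵥ z (i - 1) + b i))
      = z n := by
  induction n with
  | zero =>
    simp [Qmat, revProd, hz0]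
  | succ n ih =>
    set Wh := fun k => A k ((W k) *ᵥ z (k - 1) + b k) * W k with hWh
    set bh := fun i => (A i ((W i) *ᵥ z (i - 1) + b i)) *ᵥ b i
        + c i ((W i) *ᵥ z (i - 1) + b i) with hbh
    have hQ : ∀ i, i ≤ n → Qmat Wh (n + 1) i = Wh (n + 1) * Qmat Wh n i := by
      intro i hi
      unfold Qmat
      rw [Nat.succ_sub hi, revProd_succ]
    have hQtop : Qmat Wh (n + 1) (n + 1) = 1 := by
      simp [Qmat, revProd]
    have ih' := ih (fun k h1 h2 => hz k h1 (h2.trans (Nat.le_succ n)))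
    rw [Finset.sum_Icc_succ_top (Nat.one_le_iff_ne_zero.mpr (Nat.succ_ne_zero n)),
      hQtop, hQ 0 (Nat.zero_le n)]
    have hsum : ∀ i ∈ Finset.Icc 1 n, Qmat Wh (n + 1) i *ᵥ bh i
        = Wh (n + 1) *ᵥ (Qmat Wh n i *ᵥ bh i) := by
      intro i hi
      rw [hQ i (Finset.mem_Icc.mp hi).2, ← Matrix.mulVec_mulVec]
    rw [Finset.sum_congr rfl hsum, ← mulVec_sum', ← Matrix.mulVec_mulVec,
      Matrix.one_mulVec, ← add_assoc, ← Matrix.mulVec_add, ih']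
    have hlayer : Wh (n + 1) *ᵥ z n + bh (n + 1) = z (n + 1) := by
      have := hfreeze (n + 1) ((W (n + 1)) *ᵥ z n + b (n + 1))
      rw [hz (n + 1) (Nat.le_add_left 1 n) le_rfl]
      simp only [hWh, hbh, Nat.add_sub_cancel, ← Matrix.mulVec_mulVec]
      rw [← this, Matrix.mulVec_add]
      abel
    exact hlayer
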